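/- arXiv:1404.2899 — 2 statements merged into one kernel-verified Lean document; each statement's English description precedes it below -/
import Mathlib

section
/- Let U, V ⊆ ℂ be open sets, h : U → V a holomorphic bijection from U onto V, and φ : V → ℝ^n a C¹ map whose derivative is square-integrable on V. Then the Dirichlet energy is conformally invariant: ∫_U (‖∂_x(φ∘h)(z)‖² + ‖∂_y(φ∘h)(z)‖²) dz = ∫_V (‖∂_x φ(w)‖² + ‖∂_y φ(w)‖²) dw, where the integrals are with respect to Lebesgue measure on ℂ ≅ ℝ² and ∂_x, ∂_y denote the partial derivatives in the real and imaginary coordinate directions. -/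
open MeasureTheory

private lemma norm_sq_rot {E : Type*} [NormedAddCommGroup E] [InnerProductSpace ℝ E]
    (u v : E) (a b : ℝ) :
    ‖a • u + b • v‖ ^ 2 + ‖(-b) • u + a • v‖ ^ 2 = (a ^ 2 + b ^ 2) * (‖u‖ ^ 2 + ‖v‖ ^ 2) := by
  rw [← real_inner_self_eq_norm_sq, ← real_inner_self_eq_norm_sq,
    ← real_inner_self_eq_norm_sq, ← real_inner_self_eq_norm_sq]
  simp only [inner_add_left, inner_add_right, real_inner_smul_left, real_inner_smul_right]
  have : inner ℝ v u = (inner ℝ u v : ℝ) := real_inner_comm u v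
  rw [this]; ring

private lemma clm_conf {E : Type*} [NormedAddCommGroup E] [InnerProductSpace ℝ E]
    (L : ℂ →L[ℝ] E) (c : ℂ) :
    ‖L c‖ ^ 2 + ‖L (c * Complex.I)‖ ^ 2
      = Complex.normSq c * (‖L 1‖ ^ 2 + ‖L Complex.I‖ ^ 2) := by
  have h1 : L c = c.re • L 1 + c.im • L Complex.I := by
    rw [← _root_.map_smul, ← _root_.map_smul, ← map_add]
    congr 1
    simp [Complex.real_smul, Complex.ext_iff]
  have h2 : L (c * Complex.I) = (-c.im) • L 1 + c.re • L Complex.I := by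
    rw [← _root_.map_smul, ← _root_.map_smul, ← map_add]
    congr 1
    simp [Complex.real_smul, Complex.ext_iff]
  rw [h1, h2, norm_sq_rot, Complex.normSq_apply]
  ring

private lemma det_mul_clm (c : ℂ) :
    (((1 : ℂ →L[ℂ] ℂ).smulRight c).restrictScalars ℝ).det = Complex.normSq c := by
  have : (((1 : ℂ →L[ℂ] ℂ).smulRight c).restrictScalars ℝ : ℂ →ₗ[ℝ] ℂ)
      = Algebra.lmul ℝ ℂ c := by
    apply LinearMap.ext
    intro x
    simp [mul_comm]
  rw [ContinuousLinearMap.det, this, ← Algebra.norm_apply, Algebra.norm_complex_apply]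

/-- Let `U, V ⊆ ℂ` be open, `h : U → V` a holomorphic bijection from `U`
onto `V`, and `φ : V → ℝ^n` a `C¹` map with square-integrable derivative on `V`. Then the
Dirichlet energy is conformally invariant:
`∫_U (‖∂_x(φ∘h)‖² + ‖∂_y(φ∘h)‖²) = ∫_V (‖∂_x φ‖² + ‖∂_y φ‖²)`. -/
theorem dirichlet_energy_conformally_invariant
    (n : ℕ) (U V : Set ℂ) (hU : IsOpen U) (hV : IsOpen V)
    (h : ℂ → ℂ) (hh : DifferentiableOn ℂ h U) (hbij : Set.BijOn h U V)
    (φ : ℂ → EuclideanSpace ℝ (Fin n))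
    (hφ : ContDiffOn ℝ 1 φ V)
    (hφint : IntegrableOn (fun w => ‖fderiv ℝ φ w‖ ^ 2) V) :
    ∫ z in U, (‖fderiv ℝ (φ ∘ h) z 1‖ ^ 2 + ‖fderiv ℝ (φ ∘ h) z Complex.I‖ ^ 2)
      = ∫ w in V, (‖fderiv ℝ φ w 1‖ ^ 2 + ‖fderiv ℝ φ w Complex.I‖ ^ 2) := by
  have hdiff : ∀ z ∈ U, DifferentiableAt ℂ h z := fun z hz =>
    hh.differentiableAt (hU.mem_nhds hz)
  set f' : ℂ → ℂ →L[ℝ] ℂ :=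
    fun z => ((1 : ℂ →L[ℂ] ℂ).smulRight (deriv h z)).restrictScalars ℝ with hf'def
  have hf' : ∀ z ∈ U, HasFDerivWithinAt h (f' z) U z := by
    intro z hz
    exact (((hdiff z hz).hasDerivAt.hasFDerivAt).restrictScalars ℝ).hasFDerivWithinAt
  have key := integral_image_eq_integral_abs_det_fderiv_smul (μ := volume) hU.measurableSet
    hf' hbij.injOn
    (fun w => (‖fderiv ℝ φ w 1‖ ^ 2 + ‖fderiv ℝ φ w Complex.I‖ ^ 2))
  rw [hbij.image_eq] at key
  rw [key]
  apply setIntegral_congr_fun hU.measurableSet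
  intro z hz
  have hφd : DifferentiableAt ℝ φ (h z) :=
    (hφ.contDiffAt (hV.mem_nhds (hbij.mapsTo hz))).differentiableAt one_ne_zero
  have hhd : HasFDerivAt h (f' z) z :=
    ((hdiff z hz).hasDerivAt.hasFDerivAt).restrictScalars ℝ
  have hcomp : fderiv ℝ (φ ∘ h) z = (fderiv ℝ φ (h z)).comp (f' z) := by
    rw [← hhd.fderiv]
    exact fderiv_comp z hφd hhd.differentiableAt
  have happ : ∀ v : ℂ, f' z v = v * deriv h z := fun v => by
    simp [hf'def]
  have hdet : |(f' z).det| = Complex.normSq (deriv h z) := by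
    rw [det_mul_clm, abs_of_nonneg (Complex.normSq_nonneg _)]
  simp only [hcomp, ContinuousLinearMap.comp_apply, happ, one_mul, hdet, smul_eq_mul]
  have := clm_conf (fderiv ℝ φ (h z)) (deriv h z)
  rw [mul_comm Complex.I (deriv h z)] at *
  rw [this]
end

section
/- Let Ω ⊆ ℝ² be an open set, and let Ω⁺ = Ω ∩ {(x,y) : y > 0} and Ω⁻ = Ω ∩ {(x,y) : y < 0}. Let φ : Ω → ℝ^n be a C¹ map which is C² and satisfies Δφ = 0 on Ω⁺ and on Ω⁻. Then φ is C² and satisfies Δφ = 0 on all of Ω; that is, two harmonic maps that match to first order along the common interface glue to a single harmonic map. -/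
/-- The componentwise Laplacian `Δψ = ∂_x∂_x ψ + ∂_y∂_y ψ` of a map `ψ : ℝ² → ℝ^n`
at a point `p`. -/
noncomputable def laplacian2 (n : ℕ) (ψ : ℝ × ℝ → EuclideanSpace ℝ (Fin n))
    (p : ℝ × ℝ) : EuclideanSpace ℝ (Fin n) :=
  fderiv ℝ (fun q => fderiv ℝ ψ q ((1 : ℝ), (0 : ℝ))) p ((1 : ℝ), (0 : ℝ))
    + fderiv ℝ (fun q => fderiv ℝ ψ q ((0 : ℝ), (1 : ℝ))) p ((0 : ℝ), (1 : ℝ))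

section HarmonicGluingAuxSection

open Complex Set intervalIntegral Metric

noncomputable section

namespace HarmonicGluingAux

/-- Boundary contour integral of `g` over the rectangle `[[a,b]] ×ℂ [[c,d]]`. -/
def rectInt (g : ℂ → ℂ) (a b c d : ℝ) : ℂ :=
  ((∫ x : ℝ in a..b, g (x + c * I)) - ∫ x : ℝ in a..b, g (x + d * I)) +
    I • (∫ y : ℝ in c..d, g (b + y * I)) - I • ∫ y : ℝ in c..d, g (a + y * I)

lemma mem_rect {a b c d x y : ℝ} (hx : x ∈ uIcc a b) (hy : y ∈ uIcc c d) :
    (↑x + ↑y * I) ∈ (uIcc a b ×ℂ uIcc c d) := by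
  simp [Complex.mem_reProdIm, hx, hy]

lemma vert_intIntegrable {g : ℂ → ℂ} {U : Set ℂ} (hc : ContinuousOn g U)
    {x c d : ℝ} (h : ∀ y ∈ uIcc c d, (↑x + ↑y * I) ∈ U) :
    IntervalIntegrable (fun y : ℝ => g (x + y * I)) MeasureTheory.volume c d := by
  apply ContinuousOn.intervalIntegrable
  exact hc.comp (by fun_prop) h

lemma horiz_intIntegrable {g : ℂ → ℂ} {U : Set ℂ} (hc : ContinuousOn g U)
    {y a b : ℝ} (h : ∀ x ∈ uIcc a b, (↑x + ↑y * I) ∈ U) :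
    IntervalIntegrable (fun x : ℝ => g (x + y * I)) MeasureTheory.volume a b := by
  apply ContinuousOn.intervalIntegrable
  exact hc.comp (by fun_prop) h

lemma abs_sub_of_uIcc {p q x : ℝ} (h : x ∈ uIcc p q) : |x - p| ≤ |q - p| := by
  have h1 := le_abs_self (q - p)
  have h2 := neg_abs_le (q - p)
  rw [abs_sub_le_iff]
  rcases Set.mem_uIcc.1 h with ⟨ha, hb⟩ | ⟨ha, hb⟩ <;> constructor <;> linarith

/-- splitting a rectangle contour integral along a horizontal line -/
lemma rectInt_split {g : ℂ → ℂ} {a b c m d : ℝ}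
    (h1 : IntervalIntegrable (fun y : ℝ => g (a + y * I)) MeasureTheory.volume c m)
    (h2 : IntervalIntegrable (fun y : ℝ => g (a + y * I)) MeasureTheory.volume m d)
    (h3 : IntervalIntegrable (fun y : ℝ => g (b + y * I)) MeasureTheory.volume c m)
    (h4 : IntervalIntegrable (fun y : ℝ => g (b + y * I)) MeasureTheory.volume m d) :
    rectInt g a b c d = rectInt g a b c m + rectInt g a b m d := by
  unfold rectInt
  rw [← integral_add_adjacent_intervals h1 h2, ← integral_add_adjacent_intervals h3 h4]
  simp only [smul_eq_mul]
  ring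

/-- rectangle contour integral vanishes when the open rectangle avoids the real axis -/
lemma rectInt_zero_side {g : ℂ → ℂ} {U : Set ℂ} (hU : IsOpen U) (hc : ContinuousOn g U)
    (hd : ∀ z ∈ U, z.im ≠ 0 → DifferentiableAt ℂ g z) {a b c d : ℝ}
    (hsub : (uIcc a b ×ℂ uIcc c d) ⊆ U)
    (hsign : ∀ y ∈ Ioo (min c d) (max c d), y ≠ 0) :
    rectInt g a b c d = 0 := by
  have h := Complex.integral_boundary_rect_eq_zero_of_differentiable_on_off_countable g
    (↑a + ↑c * I) (↑b + ↑d * I) ∅ countable_empty ?_ ?_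
  · unfold rectInt
    simpa using h
  · simpa using hc.mono hsub
  · intro z hz
    rw [diff_empty, mem_reProdIm] at hz
    simp only [Complex.add_re, Complex.add_im, Complex.ofReal_re, Complex.ofReal_im,
      Complex.mul_re, Complex.mul_im, Complex.I_re, Complex.I_im, mul_zero, mul_one,
      zero_mul, sub_zero, zero_add, add_zero, zero_sub, neg_zero] at hz
    refine hd z (hsub ?_) (hsign z.im hz.2)
    rw [mem_reProdIm]
    exact ⟨Ioo_subset_Icc_self hz.1, Ioo_subset_Icc_self hz.2⟩

/-- rectangle contour integral of a function continuous on `U`, holomorphic off the real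
axis, vanishes for any rectangle inside `U`. -/
lemma rectInt_zero {g : ℂ → ℂ} {U : Set ℂ} (hU : IsOpen U) (hc : ContinuousOn g U)
    (hd : ∀ z ∈ U, z.im ≠ 0 → DifferentiableAt ℂ g z) {a b c d : ℝ}
    (hsub : (uIcc a b ×ℂ uIcc c d) ⊆ U) :
    rectInt g a b c d = 0 := by
  rcases le_or_gt 0 (min c d) with h | h
  · exact rectInt_zero_side hU hc hd hsub fun y hy => ne_of_gt (lt_of_le_of_lt h hy.1)
  rcases le_or_gt (max c d) 0 with h' | h'
  · exact rectInt_zero_side hU hc hd hsub fun y hy => ne_of_lt (lt_of_lt_of_le hy.2 h')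
  · -- 0 is strictly inside [[c,d]]; split at 0
    have h0 : (0 : ℝ) ∈ uIcc c d := ⟨h.le, h'.le⟩
    have hsub1 : (uIcc a b ×ℂ uIcc c (0:ℝ)) ⊆ U := by
      refine subset_trans ?_ hsub
      intro z hz
      rw [mem_reProdIm] at hz ⊢
      exact ⟨hz.1, Set.uIcc_subset_uIcc left_mem_uIcc h0 hz.2⟩
    have hsub2 : (uIcc a b ×ℂ uIcc (0:ℝ) d) ⊆ U := by
      refine subset_trans ?_ hsub
      intro z hz
      rw [mem_reProdIm] at hz ⊢
      exact ⟨hz.1, Set.uIcc_subset_uIcc h0 right_mem_uIcc hz.2⟩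
    have key : ∀ e : ℝ, (∀ y ∈ Ioo (min e 0) (max e 0), y ≠ 0) := by
      intro e y hy hy0
      subst hy0
      simp only [Set.mem_Ioo] at hy
      rcases le_or_gt e 0 with he | he
      · rw [max_eq_right he] at hy
        exact absurd hy.2 (lt_irrefl 0)
      · rw [min_eq_right he.le] at hy
        exact absurd hy.1 (lt_irrefl 0)
    have key2 : ∀ e : ℝ, (∀ y ∈ Ioo (min (0:ℝ) e) (max (0:ℝ) e), y ≠ 0) := by
      intro e y hy
      have := key e
      rw [min_comm, max_comm] at hy
      exact this y hy
    rw [rectInt_split (m := 0)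
        (vert_intIntegrable hc fun y hy => hsub1 (mem_rect left_mem_uIcc hy))
        (vert_intIntegrable hc fun y hy => hsub2 (mem_rect left_mem_uIcc hy))
        (vert_intIntegrable hc fun y hy => hsub1 (mem_rect right_mem_uIcc hy))
        (vert_intIntegrable hc fun y hy => hsub2 (mem_rect right_mem_uIcc hy)),
      rectInt_zero_side hU hc hd hsub1 (key c),
      rectInt_zero_side hU hc hd hsub2 (key2 d), add_zero]


/-- **Morera-type removable line lemma**: a function continuous on an open set `U ⊆ ℂ` and
complex differentiable off the real axis is complex differentiable on all of `U`. -/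
lemma morera {U : Set ℂ} (hU : IsOpen U) {g : ℂ → ℂ} (hc : ContinuousOn g U)
    (hd : ∀ z ∈ U, z.im ≠ 0 → DifferentiableAt ℂ g z) {z₀ : ℂ} (hz₀ : z₀ ∈ U) :
    DifferentiableAt ℂ g z₀ := by
  obtain ⟨r, hr, hball⟩ := Metric.isOpen_iff.1 hU z₀ hz₀
  set F : ℂ → ℂ := fun z => (∫ x : ℝ in z₀.re..z.re, g (x + z₀.im * I)) +
    I • ∫ y : ℝ in z₀.im..z.im, g (z.re + y * I) with hF
  have key : ∀ a ∈ ball z₀ r, HasDerivAt F (g a) a := by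
    intro a ha
    rw [hasDerivAt_iff_isLittleO, Asymptotics.isLittleO_iff]
    intro ε hε
    have hga : ContinuousAt g a := hc.continuousAt (hU.mem_nhds (hball ha))
    obtain ⟨δ₁, hδ₁, hδ₁'⟩ := Metric.continuousAt_iff.1 hga (ε / 2) (by positivity)
    have hdr : dist a z₀ < r := mem_ball.1 ha
    have hδpos : (0:ℝ) < min (δ₁ / 3) ((r - dist a z₀) / 4) := by
      apply lt_min (by positivity)
      have := dist_nonneg (x := a) (y := z₀)
      linarith
    filter_upwards [Metric.ball_mem_nhds a hδpos] with b hb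
    set δ := min (δ₁ / 3) ((r - dist a z₀) / 4) with hδ
    have hba : dist b a < δ := mem_ball.1 hb
    have hba1 : dist b a < δ₁ / 3 := lt_of_lt_of_le hba (min_le_left _ _)
    have hba2 : dist b a < (r - dist a z₀) / 4 := lt_of_lt_of_le hba (min_le_right _ _)
    -- re/im distance bounds
    have hre : |b.re - a.re| ≤ dist b a := by
      rw [Complex.dist_eq]
      exact (Complex.abs_re_le_norm (b - a)).trans_eq' (by simp)
    have him : |b.im - a.im| ≤ dist b a := by
      rw [Complex.dist_eq]
      exact (Complex.abs_im_le_norm (b - a)).trans_eq' (by simp)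
    have hure : |a.re - z₀.re| ≤ dist a z₀ := by
      rw [Complex.dist_eq]
      exact (Complex.abs_re_le_norm (a - z₀)).trans_eq' (by simp)
    have huim : |a.im - z₀.im| ≤ dist a z₀ := by
      rw [Complex.dist_eq]
      exact (Complex.abs_im_le_norm (a - z₀)).trans_eq' (by simp)
    have hd2 : dist a z₀ ^ 2 = (a.re - z₀.re) ^ 2 + (a.im - z₀.im) ^ 2 := by
      rw [Complex.dist_eq_re_im]
      rw [Real.sq_sqrt (by positivity)]
    -- containment of all relevant segments in the ball
    have hK : ∀ x ∈ uIcc z₀.re a.re ∪ uIcc a.re b.re,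
        ∀ y ∈ uIcc z₀.im a.im ∪ uIcc a.im b.im, (↑x + ↑y * I) ∈ ball z₀ r := by
      intro x hx y hy
      have hxb : |x - z₀.re| ≤ |a.re - z₀.re| + dist b a := by
        rcases hx with hx | hx
        · have := abs_sub_of_uIcc hx
          have := dist_nonneg (x := b) (y := a)
          linarith
        · have h1 := abs_sub_of_uIcc hx
          have h2 : |x - z₀.re| ≤ |x - a.re| + |a.re - z₀.re| := by
            have := abs_sub_le x a.re z₀.re
            simpa using this
          linarith [h1.trans hre]
      have hyb : |y - z₀.im| ≤ |a.im - z₀.im| + dist b a := by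
        rcases hy with hy | hy
        · have := abs_sub_of_uIcc hy
          have := dist_nonneg (x := b) (y := a)
          linarith
        · have h1 := abs_sub_of_uIcc hy
          have h2 : |y - z₀.im| ≤ |y - a.im| + |a.im - z₀.im| := by
            have := abs_sub_le y a.im z₀.im
            simpa using this
          linarith [h1.trans him]
      rw [mem_ball, Complex.dist_eq_re_im]
      have hrpos : (0:ℝ) < r := hr
      rw [show (↑x + ↑y * I : ℂ).re = x by simp, show (↑x + ↑y * I : ℂ).im = y by simp]
      rw [Real.sqrt_lt' hrpos]
      have e1 : (x - z₀.re) ^ 2 ≤ (|a.re - z₀.re| + dist b a) ^ 2 := by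
        rw [← _root_.sq_abs (x - z₀.re)]
        apply sq_le_sq' <;> [linarith [abs_nonneg (x - z₀.re), neg_abs_le (x - z₀.re)]; linarith [le_abs_self (x - z₀.re)]]
      have e2 : (y - z₀.im) ^ 2 ≤ (|a.im - z₀.im| + dist b a) ^ 2 := by
        rw [← _root_.sq_abs (y - z₀.im)]
        apply sq_le_sq' <;> [linarith [abs_nonneg (y - z₀.im), neg_abs_le (y - z₀.im)]; linarith [le_abs_self (y - z₀.im)]]
      nlinarith [abs_nonneg (a.re - z₀.re), abs_nonneg (a.im - z₀.im), dist_nonneg (x := b) (y := a),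
        dist_nonneg (x := a) (y := z₀), _root_.sq_abs (a.re - z₀.re), _root_.sq_abs (a.im - z₀.im)]
    -- interval integrability helpers
    have gcont : ContinuousOn g (ball z₀ r) := hc.mono hball
    have int1 : IntervalIntegrable (fun x : ℝ => g (↑x + ↑z₀.im * I)) MeasureTheory.volume z₀.re a.re :=
      horiz_intIntegrable gcont fun x hx => hK x (Or.inl hx) z₀.im (Or.inl left_mem_uIcc)
    have int2 : IntervalIntegrable (fun x : ℝ => g (↑x + ↑z₀.im * I)) MeasureTheory.volume a.re b.re :=
      horiz_intIntegrable gcont fun x hx => hK x (Or.inr hx) z₀.im (Or.inl left_mem_uIcc)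
    have int3 : IntervalIntegrable (fun y : ℝ => g (↑b.re + ↑y * I)) MeasureTheory.volume z₀.im a.im :=
      vert_intIntegrable gcont fun y hy => hK b.re (Or.inr right_mem_uIcc) y (Or.inl hy)
    have int4 : IntervalIntegrable (fun y : ℝ => g (↑b.re + ↑y * I)) MeasureTheory.volume a.im b.im :=
      vert_intIntegrable gcont fun y hy => hK b.re (Or.inr right_mem_uIcc) y (Or.inr hy)
    have int5 : IntervalIntegrable (fun x : ℝ => g (↑x + ↑a.im * I)) MeasureTheory.volume a.re b.re :=
      horiz_intIntegrable gcont fun x hx => hK x (Or.inr hx) a.im (Or.inl right_mem_uIcc)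
    have e1 := integral_add_adjacent_intervals int1 int2
    have e2 := integral_add_adjacent_intervals int3 int4
    have e3 : rectInt g a.re b.re z₀.im a.im = 0 := by
      apply rectInt_zero hU hc hd
      intro z hz
      rw [mem_reProdIm] at hz
      apply hball
      have := hK z.re (Or.inr hz.1) z.im (Or.inl hz.2)
      simpa [Complex.re_add_im] using this
    have hFba : F b - F a = (∫ x : ℝ in a.re..b.re, g (↑x + ↑a.im * I)) +
        I • ∫ y : ℝ in a.im..b.im, g (↑b.re + ↑y * I) := by
      simp only [hF]
      unfold rectInt at e3
      rw [← e1, ← e2]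
      simp only [smul_eq_mul] at e3 ⊢
      linear_combination e3
    have hsplit : F b - F a - (b - a) • g a =
        (∫ x : ℝ in a.re..b.re, (g (↑x + ↑a.im * I) - g a)) +
        I • ∫ y : ℝ in a.im..b.im, (g (↑b.re + ↑y * I) - g a) := by
      rw [hFba, intervalIntegral.integral_sub int5 intervalIntegrable_const,
        intervalIntegral.integral_sub int4 intervalIntegrable_const]
      simp only [intervalIntegral.integral_const, smul_eq_mul, Complex.real_smul]
      have hb_eq : b - a = ↑(b.re - a.re) + ↑(b.im - a.im) * I := by
        simp [Complex.ext_iff]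
      rw [hb_eq]
      ring
    have b1 : ‖∫ x : ℝ in a.re..b.re, (g (↑x + ↑a.im * I) - g a)‖ ≤ ε / 2 * |b.re - a.re| := by
      apply intervalIntegral.norm_integral_le_of_norm_le_const
      intro x hx
      have hx' : x ∈ uIcc a.re b.re := Ioc_subset_Icc_self hx
      have hdist : dist (↑x + ↑a.im * I : ℂ) a < δ₁ := by
        rw [Complex.dist_eq_re_im]
        have : √(((↑x + ↑a.im * I : ℂ).re - a.re) ^ 2 + ((↑x + ↑a.im * I : ℂ).im - a.im) ^ 2)
            = |x - a.re| := by
          simp [Real.sqrt_sq_eq_abs]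
        rw [this]
        have := (abs_sub_of_uIcc hx').trans hre
        linarith
      have := hδ₁' hdist
      rw [dist_eq_norm] at this
      exact this.le
    have b2 : ‖∫ y : ℝ in a.im..b.im, (g (↑b.re + ↑y * I) - g a)‖ ≤ ε / 2 * |b.im - a.im| := by
      apply intervalIntegral.norm_integral_le_of_norm_le_const
      intro y hy
      have hy' : y ∈ uIcc a.im b.im := Ioc_subset_Icc_self hy
      have hdist : dist (↑b.re + ↑y * I : ℂ) a < δ₁ := by
        rw [Complex.dist_eq]
        have h1 : ‖(↑b.re + ↑y * I - a : ℂ)‖ ≤ |b.re - a.re| + |y - a.im| := by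
          have := Complex.norm_le_abs_re_add_abs_im (↑b.re + ↑y * I - a)
          simpa using this
        have h2 := (abs_sub_of_uIcc hy').trans him
        linarith
      have := hδ₁' hdist
      rw [dist_eq_norm] at this
      exact this.le
    have hnre : |b.re - a.re| ≤ ‖b - a‖ := by
      rw [← dist_eq_norm]; exact hre
    have hnim : |b.im - a.im| ≤ ‖b - a‖ := by
      rw [← dist_eq_norm]; exact him
    calc ‖F b - F a - (b - a) • g a‖
        = ‖(∫ x : ℝ in a.re..b.re, (g (↑x + ↑a.im * I) - g a)) +
            I • ∫ y : ℝ in a.im..b.im, (g (↑b.re + ↑y * I) - g a)‖ := by rw [hsplit]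
      _ ≤ ‖∫ x : ℝ in a.re..b.re, (g (↑x + ↑a.im * I) - g a)‖ +
            ‖I • ∫ y : ℝ in a.im..b.im, (g (↑b.re + ↑y * I) - g a)‖ := norm_add_le _ _
      _ = ‖∫ x : ℝ in a.re..b.re, (g (↑x + ↑a.im * I) - g a)‖ +
            ‖∫ y : ℝ in a.im..b.im, (g (↑b.re + ↑y * I) - g a)‖ := by
          rw [norm_smul]; simp
      _ ≤ ε / 2 * |b.re - a.re| + ε / 2 * |b.im - a.im| := add_le_add b1 b2
      _ ≤ ε / 2 * ‖b - a‖ + ε / 2 * ‖b - a‖ := by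
          have hε2 : (0:ℝ) ≤ ε / 2 := by positivity
          exact add_le_add (mul_le_mul_of_nonneg_left hnre hε2)
            (mul_le_mul_of_nonneg_left hnim hε2)
      _ = ε * ‖b - a‖ := by ring

  have hFd : DifferentiableOn ℂ F (ball z₀ r) := fun w hw =>
    ((key w hw).differentiableAt).differentiableWithinAt
  have hFa : AnalyticOnNhd ℂ F (ball z₀ r) := hFd.analyticOnNhd isOpen_ball
  have hda : DifferentiableAt ℂ (deriv F) z₀ :=
    (hFa.deriv z₀ (mem_ball_self hr)).differentiableAt
  have heq : deriv F =ᶠ[nhds z₀] g := by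
    filter_upwards [isOpen_ball.mem_nhds (mem_ball_self hr)] with w hw using (key w hw).deriv
  exact hda.congr_of_eventuallyEq heq.symm


/-- Cauchy–Riemann: build complex differentiability from real partials. -/
lemma CR_hasDerivAt {P Q : ℂ → ℝ} {LP LQ : ℂ →L[ℝ] ℝ} {w : ℂ}
    (hP : HasFDerivAt P LP w) (hQ : HasFDerivAt Q LQ w)
    (h1 : LP 1 = -(LQ I)) (h2 : LP I = LQ 1) :
    HasDerivAt (fun z => (P z : ℂ) - Q z * I) (↑(LP 1) - ↑(LQ 1) * I) w := by
  have hP' : HasFDerivAt (fun z => (P z : ℂ)) (Complex.ofRealCLM.comp LP) w :=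
    Complex.ofRealCLM.hasFDerivAt.comp w hP
  have hQ' : HasFDerivAt (fun z => (Q z : ℂ) * I) (LQ.smulRight I) w := by
    have := hQ.smul_const I
    simpa [Complex.real_smul] using this
  have hg : HasFDerivAt (fun z => (P z : ℂ) - Q z * I)
      (Complex.ofRealCLM.comp LP - LQ.smulRight I) w := hP'.sub hQ'
  have Heq : (ContinuousLinearMap.smulRight (1 : ℂ →L[ℂ] ℂ)
      ((↑(LP 1) - ↑(LQ 1) * I : ℂ))).restrictScalars ℝ
      = Complex.ofRealCLM.comp LP - LQ.smulRight I := by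
    refine ContinuousLinearMap.ext fun z => ?_
    have hz : z = z.re • (1 : ℂ) + z.im • I := by
      simp [Complex.real_smul, Complex.re_add_im]
    rw [hz]
    simp only [ContinuousLinearMap.coe_restrictScalars', ContinuousLinearMap.smulRight_apply,
      ContinuousLinearMap.one_apply, ContinuousLinearMap.sub_apply, ContinuousLinearMap.comp_apply,
      Complex.ofRealCLM_apply, map_add, map_smul, h1, h2]
    simp [Complex.real_smul, Complex.ext_iff]
  rw [hasDerivAt_iff_hasFDerivAt]
  exact hasFDerivAt_of_restrictScalars ℝ hg Heq

/-- packaged second-derivative facts for a `C²` real function on an open planar set -/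
lemma snd_deriv_pack {O : Set (ℝ × ℝ)} (hO : IsOpen O) {u : ℝ × ℝ → ℝ}
    (hu : ContDiffOn ℝ 2 u O) {p : ℝ × ℝ} (hp : p ∈ O) :
    ∃ f'' : (ℝ × ℝ) →L[ℝ] (ℝ × ℝ) →L[ℝ] ℝ,
      (∀ v w', f'' v w' = f'' w' v) ∧
      (∀ v, HasFDerivAt (fun q => fderiv ℝ u q v) ((ContinuousLinearMap.apply ℝ ℝ v).comp f'') p) := by
  have h2 : ContDiffOn ℝ (1 + 1) u O := by norm_num at hu ⊢; exact hu
  obtain ⟨hud, -, hfd⟩ := (contDiffOn_succ_iff_fderiv_of_isOpen hO).1 h2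
  have hfdiff : DifferentiableAt ℝ (fderiv ℝ u) p :=
    ((hfd.differentiableOn one_ne_zero) p hp).differentiableAt (hO.mem_nhds hp)
  refine ⟨fderiv ℝ (fderiv ℝ u) p, ?_, ?_⟩
  · intro v w'
    refine second_derivative_symmetric_of_eventually (f := u) ?_ hfdiff.hasFDerivAt v w'
    filter_upwards [hO.mem_nhds hp] with q hq
    exact ((hud q hq).differentiableAt (hO.mem_nhds hq)).hasFDerivAt
  · intro v
    exact (ContinuousLinearMap.apply ℝ ℝ v).hasFDerivAt.comp p hfdiff.hasFDerivAt

/-- complex differentiability of the conjugate-gradient function of a harmonic `C²` function -/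
lemma g_diffAt {O : Set (ℝ × ℝ)} (hO : IsOpen O) {u : ℝ × ℝ → ℝ}
    (hu : ContDiffOn ℝ 2 u O)
    (hlap : ∀ p ∈ O, fderiv ℝ (fun q => fderiv ℝ u q ((1:ℝ),(0:ℝ))) p ((1:ℝ),(0:ℝ)) +
      fderiv ℝ (fun q => fderiv ℝ u q ((0:ℝ),(1:ℝ))) p ((0:ℝ),(1:ℝ)) = 0)
    {w : ℂ} (hw : ((w.re, w.im) : ℝ × ℝ) ∈ O) :
    DifferentiableAt ℂ (fun z : ℂ =>
      (↑(fderiv ℝ u (z.re, z.im) ((1:ℝ),(0:ℝ))) - ↑(fderiv ℝ u (z.re, z.im) ((0:ℝ),(1:ℝ))) * I : ℂ)) w := by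
  obtain ⟨f'', hsymm, happ⟩ := snd_deriv_pack hO hu hw
  have hE : ∀ z : ℂ, (Complex.equivRealProdCLM z : ℝ × ℝ) = (z.re, z.im) := fun _ => rfl
  have hP : HasFDerivAt (fun z : ℂ => fderiv ℝ u (z.re, z.im) ((1:ℝ),(0:ℝ)))
      (((ContinuousLinearMap.apply ℝ ℝ ((1:ℝ),(0:ℝ))).comp f'').comp
        (Complex.equivRealProdCLM : ℂ →L[ℝ] ℝ × ℝ)) w :=
    by
      have h0 := (happ ((1:ℝ),(0:ℝ))).comp w (Complex.equivRealProdCLM.hasFDerivAt (x := w))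
      exact h0
  have hQ : HasFDerivAt (fun z : ℂ => fderiv ℝ u (z.re, z.im) ((0:ℝ),(1:ℝ)))
      (((ContinuousLinearMap.apply ℝ ℝ ((0:ℝ),(1:ℝ))).comp f'').comp
        (Complex.equivRealProdCLM : ℂ →L[ℝ] ℝ × ℝ)) w :=
    by
      have h0 := (happ ((0:ℝ),(1:ℝ))).comp w (Complex.equivRealProdCLM.hasFDerivAt (x := w))
      exact h0
  -- evaluate the second derivatives that appear in the laplacian
  have hlap' : f'' ((1:ℝ),(0:ℝ)) ((1:ℝ),(0:ℝ)) + f'' ((0:ℝ),(1:ℝ)) ((0:ℝ),(1:ℝ)) = 0 := by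
    have h := hlap _ hw
    rw [(happ ((1:ℝ),(0:ℝ))).fderiv, (happ ((0:ℝ),(1:ℝ))).fderiv] at h
    simpa using h
  have h1e : Complex.equivRealProdCLM (1 : ℂ) = ((1:ℝ),(0:ℝ)) := by simp [hE]
  have hIe : Complex.equivRealProdCLM I = ((0:ℝ),(1:ℝ)) := by simp [hE]
  refine (CR_hasDerivAt hP hQ ?_ ?_).differentiableAt
  · simp only [ContinuousLinearMap.comp_apply, ContinuousLinearEquiv.coe_coe, h1e, hIe,
      ContinuousLinearMap.apply_apply]
    linarith [hlap', hsymm ((1:ℝ),(0:ℝ)) ((0:ℝ),(1:ℝ))]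
  · simp only [ContinuousLinearMap.comp_apply, ContinuousLinearEquiv.coe_coe, h1e, hIe,
      ContinuousLinearMap.apply_apply]
    exact hsymm ((0:ℝ),(1:ℝ)) ((1:ℝ),(0:ℝ))


lemma lap_component {n : ℕ} {φ : ℝ × ℝ → EuclideanSpace ℝ (Fin n)} {O : Set (ℝ × ℝ)}
    (hO : IsOpen O) (hφ : ContDiffOn ℝ 2 φ O) {p : ℝ × ℝ} (hp : p ∈ O) (j : Fin n) :
    laplacian2 n φ p j =
      fderiv ℝ (fun q => fderiv ℝ (fun q' => φ q' j) q ((1:ℝ),(0:ℝ))) p ((1:ℝ),(0:ℝ)) +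
      fderiv ℝ (fun q => fderiv ℝ (fun q' => φ q' j) q ((0:ℝ),(1:ℝ))) p ((0:ℝ),(1:ℝ)) := by
  have h2 : ContDiffOn ℝ (1+1) φ O := by norm_num at hφ ⊢; exact hφ
  obtain ⟨hud, -, hfd⟩ := (contDiffOn_succ_iff_fderiv_of_isOpen hO).1 h2
  have hfdiff : DifferentiableAt ℝ (fderiv ℝ φ) p :=
    ((hfd.differentiableOn one_ne_zero) p hp).differentiableAt (hO.mem_nhds hp)
  have key : ∀ v v' : ℝ × ℝ,
      fderiv ℝ (fun q => fderiv ℝ (fun q' => φ q' j) q v) p v'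
        = (fderiv ℝ (fun q => fderiv ℝ φ q v) p v') j := by
    intro v v'
    have hX0 := (ContinuousLinearMap.apply ℝ (EuclideanSpace ℝ (Fin n)) v).hasFDerivAt.comp p
      hfdiff.hasFDerivAt
    have hX : HasFDerivAt (fun q => fderiv ℝ φ q v)
        ((ContinuousLinearMap.apply ℝ (EuclideanSpace ℝ (Fin n)) v).comp
          (fderiv ℝ (fderiv ℝ φ) p)) p := hX0
    have hXj0 := (EuclideanSpace.proj (𝕜 := ℝ) j).hasFDerivAt.comp p hX
    have hXj : HasFDerivAt (fun q => (fderiv ℝ φ q v) j)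
        ((EuclideanSpace.proj j).comp
          ((ContinuousLinearMap.apply ℝ (EuclideanSpace ℝ (Fin n)) v).comp
            (fderiv ℝ (fderiv ℝ φ) p))) p := hXj0
    have heq : (fun q => fderiv ℝ (fun q' => φ q' j) q v) =ᶠ[nhds p]
        (fun q => (fderiv ℝ φ q v) j) := by
      filter_upwards [hO.mem_nhds hp] with q hq
      have hdq : DifferentiableAt ℝ φ q := (hud q hq).differentiableAt (hO.mem_nhds hq)
      have hcomp0 := ((EuclideanSpace.proj (𝕜 := ℝ) j).hasFDerivAt.comp q hdq.hasFDerivAt).fderiv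
      have hcomp : fderiv ℝ (fun q' => φ q' j) q = (EuclideanSpace.proj j).comp (fderiv ℝ φ q) :=
        hcomp0
      rw [hcomp]; rfl
    have hfe : fderiv ℝ (fun q => fderiv ℝ (fun q' => φ q' j) q v) p
        = fderiv ℝ (fun q => (fderiv ℝ φ q v) j) p := heq.fderiv_eq
    rw [hfe, hXj.fderiv, hX.fderiv]
    rfl
  simp only [laplacian2]
  rw [key ((1:ℝ),(0:ℝ)) ((1:ℝ),(0:ℝ)), key ((0:ℝ),(1:ℝ)) ((0:ℝ),(1:ℝ))]
  rfl


lemma component_smooth {n : ℕ} {Ω : Set (ℝ × ℝ)} (hΩ : IsOpen Ω)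
    {φ : ℝ × ℝ → EuclideanSpace ℝ (Fin n)}
    (hC1 : ContDiffOn ℝ 1 φ Ω)
    (hC2p : ContDiffOn ℝ 2 φ (Ω ∩ {p : ℝ × ℝ | 0 < p.2}))
    (hharmp : ∀ p ∈ Ω ∩ {p : ℝ × ℝ | 0 < p.2}, laplacian2 n φ p = 0)
    (hC2m : ContDiffOn ℝ 2 φ (Ω ∩ {p : ℝ × ℝ | p.2 < 0}))
    (hharmm : ∀ p ∈ Ω ∩ {p : ℝ × ℝ | p.2 < 0}, laplacian2 n φ p = 0) (j : Fin n) :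
    ContDiffOn ℝ 2 (fun p => φ p j) Ω ∧
      ∀ p ∈ Ω,
        fderiv ℝ (fun q => fderiv ℝ (fun q' => φ q' j) q ((1:ℝ),(0:ℝ))) p ((1:ℝ),(0:ℝ)) +
        fderiv ℝ (fun q => fderiv ℝ (fun q' => φ q' j) q ((0:ℝ),(1:ℝ))) p ((0:ℝ),(1:ℝ)) = 0 := by
  set u : ℝ × ℝ → ℝ := fun p => φ p j with hu_def
  have hu1 : ContDiffOn ℝ 1 u Ω := by
    have h0 := (EuclideanSpace.proj (𝕜 := ℝ) j).contDiff.comp_contDiffOn hC1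
    exact h0
  have hOpo : IsOpen (Ω ∩ {p : ℝ × ℝ | 0 < p.2}) :=
    hΩ.inter (isOpen_lt continuous_const continuous_snd)
  have hOmo : IsOpen (Ω ∩ {p : ℝ × ℝ | p.2 < 0}) :=
    hΩ.inter (isOpen_lt continuous_snd continuous_const)
  have hup : ContDiffOn ℝ 2 u (Ω ∩ {p : ℝ × ℝ | 0 < p.2}) := by
    have h0 := (EuclideanSpace.proj (𝕜 := ℝ) j).contDiff.comp_contDiffOn hC2p
    exact h0
  have hum : ContDiffOn ℝ 2 u (Ω ∩ {p : ℝ × ℝ | p.2 < 0}) := by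
    have h0 := (EuclideanSpace.proj (𝕜 := ℝ) j).contDiff.comp_contDiffOn hC2m
    exact h0
  have hlapp : ∀ p ∈ Ω ∩ {p : ℝ × ℝ | 0 < p.2},
      fderiv ℝ (fun q => fderiv ℝ u q ((1:ℝ),(0:ℝ))) p ((1:ℝ),(0:ℝ)) +
      fderiv ℝ (fun q => fderiv ℝ u q ((0:ℝ),(1:ℝ))) p ((0:ℝ),(1:ℝ)) = 0 := by
    intro p hp
    have h := lap_component hOpo hC2p hp j
    rw [hharmp p hp] at h
    simpa using h.symm
  have hlapm : ∀ p ∈ Ω ∩ {p : ℝ × ℝ | p.2 < 0},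
      fderiv ℝ (fun q => fderiv ℝ u q ((1:ℝ),(0:ℝ))) p ((1:ℝ),(0:ℝ)) +
      fderiv ℝ (fun q => fderiv ℝ u q ((0:ℝ),(1:ℝ))) p ((0:ℝ),(1:ℝ)) = 0 := by
    intro p hp
    have h := lap_component hOmo hC2m hp j
    rw [hharmm p hp] at h
    simpa using h.symm
  set g : ℂ → ℂ := fun z =>
    (↑(fderiv ℝ u (z.re, z.im) ((1:ℝ),(0:ℝ))) - ↑(fderiv ℝ u (z.re, z.im) ((0:ℝ),(1:ℝ))) * I : ℂ)
    with hg_def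
  set U : Set ℂ := (fun z : ℂ => ((z.re, z.im) : ℝ × ℝ)) ⁻¹' Ω with hU_def
  have hUo : IsOpen U := hΩ.preimage (Complex.continuous_re.prodMk Complex.continuous_im)
  have hfc : ContinuousOn (fderiv ℝ u) Ω := hu1.continuousOn_fderiv_of_isOpen hΩ le_rfl
  have hembc : ContinuousOn (fun z : ℂ => ((z.re, z.im) : ℝ × ℝ)) U :=
    (Complex.continuous_re.prodMk Complex.continuous_im).continuousOn
  have hfcU : ContinuousOn (fun z : ℂ => fderiv ℝ u (z.re, z.im)) U :=
    hfc.comp hembc fun z hz => hz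
  have hgc : ContinuousOn g U := by
    have c1 : ContinuousOn (fun z : ℂ => fderiv ℝ u (z.re, z.im) ((1:ℝ),(0:ℝ))) U := by
      have h0 := (ContinuousLinearMap.apply ℝ ℝ ((1:ℝ),(0:ℝ))).continuous.comp_continuousOn hfcU
      exact h0
    have c2 : ContinuousOn (fun z : ℂ => fderiv ℝ u (z.re, z.im) ((0:ℝ),(1:ℝ))) U := by
      have h0 := (ContinuousLinearMap.apply ℝ ℝ ((0:ℝ),(1:ℝ))).continuous.comp_continuousOn hfcU
      exact h0
    have c1' : ContinuousOn (fun z : ℂ => (↑(fderiv ℝ u (z.re, z.im) ((1:ℝ),(0:ℝ))) : ℂ)) U := by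
      have h0 := Complex.continuous_ofReal.comp_continuousOn c1
      exact h0
    have c2' : ContinuousOn (fun z : ℂ => (↑(fderiv ℝ u (z.re, z.im) ((0:ℝ),(1:ℝ))) : ℂ)) U := by
      have h0 := Complex.continuous_ofReal.comp_continuousOn c2
      exact h0
    exact c1'.sub (c2'.mul continuousOn_const)
  have hgd : ∀ z ∈ U, z.im ≠ 0 → DifferentiableAt ℂ g z := by
    intro z hz hzim
    rcases hzim.lt_or_gt with hneg | hpos
    · exact g_diffAt hOmo hum hlapm ⟨hz, hneg⟩
    · exact g_diffAt hOpo hup hlapp ⟨hz, hpos⟩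
  have hgall : ∀ z ∈ U, DifferentiableAt ℂ g z := fun z hz => morera hUo hgc hgd hz
  have hgan : ContDiffOn ℝ 2 g U := by
    have hdo : DifferentiableOn ℂ g U := fun z hz => (hgall z hz).differentiableWithinAt
    exact (hdo.contDiffOn hUo).restrict_scalars ℝ
  -- pointwise identities
  have hpx_eq : ∀ p : ℝ × ℝ, fderiv ℝ u p ((1:ℝ),(0:ℝ)) = (g (↑p.1 + ↑p.2 * I)).re := by
    intro p
    simp [hg_def]
  have hpy_eq : ∀ p : ℝ × ℝ, fderiv ℝ u p ((0:ℝ),(1:ℝ)) = -(g (↑p.1 + ↑p.2 * I)).im := by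
    intro p
    simp [hg_def]
  have hmaps : MapsTo (fun p : ℝ × ℝ => (↑p.1 + ↑p.2 * I : ℂ)) Ω U := by
    intro p hp
    simp only [hU_def, mem_preimage]
    simpa using hp
  have hψeq : (fun p : ℝ × ℝ => (↑p.1 + ↑p.2 * I : ℂ)) = ⇑Complex.equivRealProdCLM.symm :=
    funext fun p => (Complex.equivRealProdCLM_symm_apply p).symm
  have hψ : ContDiff ℝ 2 (fun p : ℝ × ℝ => (↑p.1 + ↑p.2 * I : ℂ)) := by
    rw [hψeq]; exact Complex.equivRealProdCLM.symm.contDiff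
  have hgΩ2 : ContDiffOn ℝ 2 (fun p : ℝ × ℝ => g (↑p.1 + ↑p.2 * I)) Ω :=
    hgan.comp hψ.contDiffOn hmaps
  have hGsm : ContDiffOn ℝ 1 (fun p : ℝ × ℝ =>
      ((g (↑p.1 + ↑p.2 * I)).re • (ContinuousLinearMap.fst ℝ ℝ ℝ) +
       (-(g (↑p.1 + ↑p.2 * I)).im) • (ContinuousLinearMap.snd ℝ ℝ ℝ))) Ω := by
    have hre : ContDiffOn ℝ 1 (fun p : ℝ × ℝ => (g (↑p.1 + ↑p.2 * I)).re) Ω := by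
      have h0 := Complex.reCLM.contDiff.comp_contDiffOn (hgΩ2.of_le one_le_two)
      exact h0
    have him : ContDiffOn ℝ 1 (fun p : ℝ × ℝ => (g (↑p.1 + ↑p.2 * I)).im) Ω := by
      have h0 := Complex.imCLM.contDiff.comp_contDiffOn (hgΩ2.of_le one_le_two)
      exact h0
    exact (hre.smul contDiffOn_const).add (him.neg.smul contDiffOn_const)
  have hclm_decomp : ∀ L : (ℝ × ℝ) →L[ℝ] ℝ,
      L = L ((1:ℝ),(0:ℝ)) • ContinuousLinearMap.fst ℝ ℝ ℝ
        + L ((0:ℝ),(1:ℝ)) • ContinuousLinearMap.snd ℝ ℝ ℝ := by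
    intro L
    refine ContinuousLinearMap.ext fun v => ?_
    have hv : v = v.1 • ((1:ℝ),(0:ℝ)) + v.2 • ((0:ℝ),(1:ℝ)) := by
      ext <;> simp
    rw [hv]
    simp only [map_add, map_smul, ContinuousLinearMap.add_apply, ContinuousLinearMap.smul_apply,
      ContinuousLinearMap.coe_fst', ContinuousLinearMap.coe_snd', smul_eq_mul]
    simp
  have hfderiv_congr : ∀ p ∈ Ω, fderiv ℝ u p =
      ((g (↑p.1 + ↑p.2 * I)).re • ContinuousLinearMap.fst ℝ ℝ ℝ
        + (-(g (↑p.1 + ↑p.2 * I)).im) • ContinuousLinearMap.snd ℝ ℝ ℝ) := by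
    intro p _
    rw [hclm_decomp (fderiv ℝ u p), hpx_eq p, hpy_eq p]
  have hu2 : ContDiffOn ℝ 2 u Ω := by
    have h12 : ContDiffOn ℝ (1+1) u Ω := by
      rw [contDiffOn_succ_iff_fderiv_of_isOpen hΩ]
      exact ⟨hu1.differentiableOn one_ne_zero, by simp, hGsm.congr hfderiv_congr⟩
    norm_num at h12 ⊢
    exact h12
  refine ⟨hu2, ?_⟩
  intro p hp
  have hw : DifferentiableAt ℂ g (↑p.1 + ↑p.2 * I) := hgall _ (hmaps hp)
  have hgder : HasDerivAt g (deriv g (↑p.1 + ↑p.2 * I)) (↑p.1 + ↑p.2 * I) := hw.hasDerivAt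
  set c := deriv g (↑p.1 + ↑p.2 * I) with hc_def
  have hgR : HasFDerivAt g
      ((ContinuousLinearMap.smulRight (1 : ℂ →L[ℂ] ℂ) c).restrictScalars ℝ)
      (↑p.1 + ↑p.2 * I) := hgder.hasFDerivAt.restrictScalars ℝ
  have hψD : HasFDerivAt (fun q : ℝ × ℝ => (↑q.1 + ↑q.2 * I : ℂ))
      (Complex.equivRealProdCLM.symm : ℝ × ℝ →L[ℝ] ℂ) p := by
    have h0 := Complex.equivRealProdCLM.symm.hasFDerivAt (x := p)
    rw [← hψeq] at h0
    exact h0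
  have hPX : HasFDerivAt (fun q : ℝ × ℝ => (g (↑q.1 + ↑q.2 * I)).re)
      (Complex.reCLM.comp
        (((ContinuousLinearMap.smulRight (1 : ℂ →L[ℂ] ℂ) c).restrictScalars ℝ).comp
          (Complex.equivRealProdCLM.symm : ℝ × ℝ →L[ℝ] ℂ))) p := by
    have h0 := Complex.reCLM.hasFDerivAt.comp p (hgR.comp p hψD)
    exact h0
  have hPY : HasFDerivAt (fun q : ℝ × ℝ => -(g (↑q.1 + ↑q.2 * I)).im)
      (-(Complex.imCLM.comp
        (((ContinuousLinearMap.smulRight (1 : ℂ →L[ℂ] ℂ) c).restrictScalars ℝ).comp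
          (Complex.equivRealProdCLM.symm : ℝ × ℝ →L[ℝ] ℂ)))) p := by
    have h0 := (Complex.imCLM.hasFDerivAt.comp p (hgR.comp p hψD)).neg
    exact h0
  have hpx_fun : (fun q : ℝ × ℝ => fderiv ℝ u q ((1:ℝ),(0:ℝ)))
      = fun q => (g (↑q.1 + ↑q.2 * I)).re := funext hpx_eq
  have hpy_fun : (fun q : ℝ × ℝ => fderiv ℝ u q ((0:ℝ),(1:ℝ)))
      = fun q => -(g (↑q.1 + ↑q.2 * I)).im := funext hpy_eq
  rw [hpx_fun, hpy_fun, hPX.fderiv, hPY.fderiv]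
  simp only [ContinuousLinearMap.comp_apply, ContinuousLinearMap.neg_apply,
    ContinuousLinearMap.coe_restrictScalars', ContinuousLinearMap.smulRight_apply,
    ContinuousLinearMap.one_apply, ContinuousLinearEquiv.coe_coe,
    Complex.equivRealProdCLM_symm_apply, Complex.reCLM_apply, Complex.imCLM_apply]
  simp [Complex.mul_re, Complex.mul_im]


end HarmonicGluingAux

end

end HarmonicGluingAuxSection

/-- Let `Ω ⊆ ℝ²` be open, `Ω⁺ = Ω ∩ {y > 0}`, `Ω⁻ = Ω ∩ {y < 0}`, and
`φ : Ω → ℝ^n` a `C¹` map which is `C²` and harmonic on `Ω⁺` and on `Ω⁻`. Then `φ` is `C²`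
and harmonic on all of `Ω`: two harmonic maps matching to first order along the common
interface glue to a single harmonic map. -/
theorem harmonic_gluing
    (n : ℕ) (Ω : Set (ℝ × ℝ)) (hΩ : IsOpen Ω)
    (φ : ℝ × ℝ → EuclideanSpace ℝ (Fin n))
    (hC1 : ContDiffOn ℝ 1 φ Ω)
    (hC2p : ContDiffOn ℝ 2 φ (Ω ∩ {p : ℝ × ℝ | 0 < p.2}))
    (hharmp : ∀ p ∈ Ω ∩ {p : ℝ × ℝ | 0 < p.2}, laplacian2 n φ p = 0)
    (hC2m : ContDiffOn ℝ 2 φ (Ω ∩ {p : ℝ × ℝ | p.2 < 0}))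
    (hharmm : ∀ p ∈ Ω ∩ {p : ℝ × ℝ | p.2 < 0}, laplacian2 n φ p = 0) :
    ContDiffOn ℝ 2 φ Ω ∧ ∀ p ∈ Ω, laplacian2 n φ p = 0 := by
  have hcomp := fun j : Fin n =>
    HarmonicGluingAux.component_smooth hΩ hC1 hC2p hharmp hC2m hharmm j
  have hC2 : ContDiffOn ℝ 2 φ Ω := by
    rw [← (EuclideanSpace.equiv (Fin n) ℝ).comp_contDiffOn_iff]
    rw [contDiffOn_pi]
    intro j
    exact (hcomp j).1
  refine ⟨hC2, fun p hp => ?_⟩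
  have hj : ∀ j, laplacian2 n φ p j = 0 := by
    intro j
    rw [HarmonicGluingAux.lap_component hΩ hC2 hp j]
    exact (hcomp j).2 p hp
  exact PiLp.ext hj
end
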